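/- In a category C with object A satisfying: every arrow is a strict epimorphism, every object admits an arrow from A, and Hom(A, -) preserves strict epimorphisms, every endomorphism of A is an automorphism, i.e., Aut(A) = Hom(A, A) as a set. -/

import Mathlib

open CategoryTheory

universe v u

/-- Grothendieck strict epimorphism. -/
def IsStrictEpi {C : Type u} [Category.{v} C] {X Y : C} (f : X ⟶ Y) : Prop :=
  ∀ {Z : C} (g : X ⟶ Z),
    (∀ {W : C} (s t : W ⟶ X), s ≫ f = t ≫ f → s ≫ g = t ≫ g) →
    ∃! h : Y ⟶ Z, f ≫ h = g

/-- Every endomorphism of `A` is an automorphism: `Aut(A) = Hom(A,A)`. -/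
theorem stmt1 {C : Type u} [Category.{v} C] (A : C)
    (h1 : ∀ {X Y : C} (f : X ⟶ Y), IsStrictEpi f)
    (h2 : ∀ X : C, Nonempty (A ⟶ X))
    (h3 : ∀ {X Y : C} (f : X ⟶ Y), IsStrictEpi f →
      IsStrictEpi (C := Type v) (X := A ⟶ X) (Y := A ⟶ Y) (TypeCat.ofHom (fun g : A ⟶ X => g ≫ f))) :
    ∀ f : A ⟶ A, IsIso f := by
  -- Strict epis in Type are surjective
  have surj : ∀ {X Y : Type v} (F : X ⟶ Y), IsStrictEpi F → Function.Surjective F := by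
    intro X Y F hF y
    obtain ⟨h₀, hh₀, huniq⟩ := hF (TypeCat.ofHom fun _ => (⟨True⟩ : ULift Prop)) (fun s t _ => rfl)
    have key : TypeCat.ofHom (fun y => (⟨∃ x, F x = y⟩ : ULift Prop)) = h₀ := by
      apply huniq
      ext x
      exact iff_of_eq (eq_true (⟨x, rfl⟩ : ∃ x', F x' = F x))
    have key2 : TypeCat.ofHom (fun _ : Y => (⟨True⟩ : ULift Prop)) = h₀ := by
      apply huniq
      rfl
    have := congrArg (fun φ => φ y) (key.trans key2.symm)
    have : (∃ x, F x = y) = True := congrArg ULift.down this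
    exact this ▸ trivial
  intro f
  obtain ⟨s, hs⟩ := surj _ (h3 f (h1 f)) (𝟙 A)
  simp only at hs
  change s ≫ f = 𝟙 A at hs
  -- every strict epi is epi; s is epi
  have sepi : ∀ (a b : A ⟶ A), s ≫ a = s ≫ b → a = b := by
    intro a b hab
    obtain ⟨h₀, hh₀, huniq⟩ := h1 s (s ≫ a)
      (fun u v huv => by rw [← Category.assoc, ← Category.assoc, huv])
    exact (huniq a rfl).trans (huniq b hab.symm).symm
  have hfs : f ≫ s = 𝟙 A := by
    apply sepi
    rw [← Category.assoc, hs, Category.id_comp, Category.comp_id]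
  exact ⟨s, hfs, hs⟩
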